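/- For any n ≥ 3, any cycle automorphism of the complete graph K_n is induced by a vertex relabeling, i.e., it equals the edge permutation arising from a permutation of the vertices of K_n. -/

import Mathlib

/-- Edges of the complete graph `K_n`: unordered pairs of distinct vertices. -/
abbrev Edge (n : ℕ) : Type := {e : Sym2 (Fin n) // ¬ e.IsDiag}

/-- A set of edges of `K_n` is a cycle edge set if it is the edge set of some
cycle in the complete graph on `Fin n`. -/
def IsCycleEdgeSet {n : ℕ} (F : Set (Sym2 (Fin n))) : Prop :=
  ∃ (u : Fin n) (w : (⊤ : SimpleGraph (Fin n)).Walk u u),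
    w.IsCycle ∧ F = {e | e ∈ w.edges}

-- A: triangle is a cycle edge set
lemma triangle_cec {n : ℕ} {a b c : Fin n} (hab : a ≠ b) (hbc : b ≠ c) (hac : a ≠ c) :
    IsCycleEdgeSet {s(a,b), s(b,c), s(c,a)} := by
  refine ⟨a, SimpleGraph.Walk.cons (by simpa using hab)
    (SimpleGraph.Walk.cons (by simpa using hbc)
      (SimpleGraph.Walk.cons (by simpa using (Ne.symm hac)) SimpleGraph.Walk.nil)), ?_, ?_⟩
  · constructor
    · constructor
      · constructor
        simp [Sym2.eq_iff]
        tauto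
      · simp
    · simp [hab, hbc, hac, Ne.symm hab, Ne.symm hbc, Ne.symm hac]
  · ext e
    simp

-- B: a 3-element cycle edge set is a triangle
lemma cec_triple {n : ℕ} {x y z : Sym2 (Fin n)}
    (h : IsCycleEdgeSet {x, y, z}) :
    ∃ a b c : Fin n, a ≠ b ∧ b ≠ c ∧ a ≠ c ∧
      ({x, y, z} : Set (Sym2 (Fin n))) = {s(a,b), s(b,c), s(c,a)} := by
  obtain ⟨u, w, hc, hF⟩ := h
  have hnd : w.edges.Nodup := hc.isCircuit.isTrail.edges_nodup
  have hlen : w.length = 3 := by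
    have h3 : 3 ≤ w.length := hc.three_le_length
    have hsub : w.edges.toFinset ⊆ {x, y, z} := by
      intro e he
      have : e ∈ ({x, y, z} : Set (Sym2 (Fin n))) := by
        rw [hF]; simpa using he
      simpa using this
    have hcard : w.edges.toFinset.card ≤ 3 := by
      calc w.edges.toFinset.card ≤ ({x,y,z} : Finset (Sym2 (Fin n))).card :=
            Finset.card_le_card hsub
        _ ≤ 3 := by
            apply (Finset.card_insert_le _ _).trans
            apply Nat.succ_le_succ
            apply (Finset.card_insert_le _ _).trans
            simp
    rw [List.toFinset_card_of_nodup hnd, SimpleGraph.Walk.length_edges] at hcard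
    omega
  -- decompose the walk
  cases w with
  | nil => simp at hlen
  | cons h1 p =>
    cases p with
    | nil => simp at hlen
    | cons h2 q =>
      cases q with
      | nil => simp at hlen
      | cons h3 r =>
        cases r with
        | cons h4 s => simp at hlen
        | nil =>
          rename_i b c
          have hsup := hc.support_nodup
          simp [SimpleGraph.Walk.support_cons] at hsup
          obtain ⟨⟨hbc, hbu⟩, hcu⟩ := hsup
          have hub : u ≠ b := by simpa using h1.ne
          refine ⟨u, b, c, hub, hbc, fun h => hcu h.symm, ?_⟩
          rw [hF]
          ext e
          simp [SimpleGraph.Walk.edges_cons]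

/-- Two distinct unordered pairs share at most one element. -/
lemma shared_unique {n : ℕ} {x y : Sym2 (Fin n)} (hxy : x ≠ y) {t t' : Fin n}
    (h1 : t ∈ x) (h2 : t ∈ y) (h3 : t' ∈ x) (h4 : t' ∈ y) : t = t' := by
  by_contra hne
  exact hxy (Sym2.eq_of_ne_mem hne h1 h3 h2 h4)

/-- Any two edges of a triangle share a vertex. -/
lemma triangle_pair_share {n : ℕ} {a b c : Fin n} {p q : Sym2 (Fin n)}
    (hp : p ∈ ({s(a,b), s(b,c), s(c,a)} : Set (Sym2 (Fin n))))
    (hq : q ∈ ({s(a,b), s(b,c), s(c,a)} : Set (Sym2 (Fin n)))) :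
    ∃ t, t ∈ p ∧ t ∈ q := by
  simp at hp hq
  rcases hp with rfl | rfl | rfl <;> rcases hq with rfl | rfl | rfl <;>
    first
      | exact ⟨_, Sym2.mem_mk_left _ _, Sym2.mem_mk_left _ _⟩
      | exact ⟨_, Sym2.mem_mk_left _ _, Sym2.mem_mk_right _ _⟩
      | exact ⟨_, Sym2.mem_mk_right _ _, Sym2.mem_mk_left _ _⟩
      | exact ⟨_, Sym2.mem_mk_right _ _, Sym2.mem_mk_right _ _⟩

/-- The three edges of a triangle have no common vertex. -/
lemma triangle_no_common {n : ℕ} {a b c : Fin n} (hab : a ≠ b) (hbc : b ≠ c) (hac : a ≠ c)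
    {t : Fin n} (h1 : t ∈ s(a,b)) (h2 : t ∈ s(b,c)) (h3 : t ∈ s(c,a)) : False := by
  simp [Sym2.mem_iff] at h1 h2 h3
  rcases h1 with rfl | rfl
  · rcases h2 with h | h
    · exact hab h
    · exact hac h
  · rcases h3 with h | h
    · exact hbc h
    · exact hab h.symm

/-- A star (three distinct edges with a common vertex) is not a cycle edge set. -/
lemma star_not_cec {n : ℕ} {x y z : Sym2 (Fin n)} (hxy : x ≠ y) (hyz : y ≠ z) (hxz : x ≠ z)
    {t : Fin n} (htx : t ∈ x) (hty : t ∈ y) (htz : t ∈ z) :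
    ¬ IsCycleEdgeSet {x, y, z} := by
  intro h
  obtain ⟨a, b, c, hab, hbc, hac, heq⟩ := cec_triple h
  have hx : x ∈ ({s(a,b), s(b,c), s(c,a)} : Set (Sym2 (Fin n))) := by
    rw [← heq]; simp
  have hy : y ∈ ({s(a,b), s(b,c), s(c,a)} : Set (Sym2 (Fin n))) := by
    rw [← heq]; simp
  have hz : z ∈ ({s(a,b), s(b,c), s(c,a)} : Set (Sym2 (Fin n))) := by
    rw [← heq]; simp
  simp only [Set.mem_insert_iff, Set.mem_singleton_iff] at hx hy hz
  -- t belongs to all three triangle edges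
  have h1 : t ∈ s(a,b) ∨ t ∈ s(b,c) ∨ t ∈ s(c,a) := by
    rcases hx with rfl | rfl | rfl <;> tauto
  have key : ∀ p ∈ ({s(a,b), s(b,c), s(c,a)} : Set (Sym2 (Fin n))), t ∈ p := by
    intro p hp
    simp at hp
    -- x, y, z are three distinct elements, and the triangle set has exactly 3 elements
    have : p = x ∨ p = y ∨ p = z := by
      have : p ∈ ({x, y, z} : Set (Sym2 (Fin n))) := by
        rw [heq]; simpa using hp
      simpa using this
    rcases this with rfl | rfl | rfl <;> assumption
  exact triangle_no_common hab hbc hac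
    (key _ (by simp)) (key _ (by simp)) (key _ (by simp))

/-- Three distinct pairwise adjacent edges with no common vertex form a triangle
(hence a cycle edge set). -/
lemma pairwise_adj_cec {n : ℕ} {x y z : Sym2 (Fin n)} (hxy : x ≠ y) (hyz : y ≠ z) (hxz : x ≠ z)
    (sxy : ∃ t, t ∈ x ∧ t ∈ y) (sxz : ∃ t, t ∈ x ∧ t ∈ z) (syz : ∃ t, t ∈ y ∧ t ∈ z)
    (hnc : ¬ ∃ t, t ∈ x ∧ t ∈ y ∧ t ∈ z) :
    IsCycleEdgeSet {x, y, z} := by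
  obtain ⟨t1, ht1x, ht1y⟩ := sxy
  obtain ⟨t2, ht2x, ht2z⟩ := sxz
  obtain ⟨t3, ht3y, ht3z⟩ := syz
  have h12 : t1 ≠ t2 := by rintro rfl; exact hnc ⟨t1, ht1x, ht1y, ht2z⟩
  have h13 : t1 ≠ t3 := by rintro rfl; exact hnc ⟨t1, ht1x, ht1y, ht3z⟩
  have h23 : t2 ≠ t3 := by rintro rfl; exact hnc ⟨t2, ht2x, ht3y, ht2z⟩
  have hx : x = s(t1, t2) := (Sym2.mem_and_mem_iff h12).mp ⟨ht1x, ht2x⟩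
  have hy : y = s(t1, t3) := (Sym2.mem_and_mem_iff h13).mp ⟨ht1y, ht3y⟩
  have hz : z = s(t2, t3) := (Sym2.mem_and_mem_iff h23).mp ⟨ht2z, ht3z⟩
  have := triangle_cec h12 h23 h13
  have hset : ({x, y, z} : Set (Sym2 (Fin n))) = {s(t1,t2), s(t2,t3), s(t3,t1)} := by
    rw [hx, hy, hz]
    ext e
    simp [Sym2.eq_swap]
    constructor
    · rintro (rfl | rfl | rfl) <;> simp [Sym2.eq_swap] <;> tauto
    · rintro (rfl | rfl | rfl) <;> simp [Sym2.eq_swap] <;> tauto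
  rw [hset]
  exact this

/-- Given a vertex of a non-diagonal pair, get the other endpoint. -/
lemma other_endpoint {n : ℕ} {e : Sym2 (Fin n)} (hd : ¬ e.IsDiag) {t : Fin n} (ht : t ∈ e) :
    ∃ a, a ≠ t ∧ e = s(t, a) := by
  induction e using Sym2.inductionOn with
  | hf u v =>
    rw [Sym2.mem_iff] at ht
    rcases ht with rfl | rfl
    · exact ⟨v, fun h => hd (by simp [h]), rfl⟩
    · exact ⟨u, fun h => hd (by simp [h]), Sym2.eq_swap⟩

lemma image_triple {n : ℕ} (e f g : Edge n) :
    (Subtype.val '' ({e, f, g} : Set (Edge n)) : Set (Sym2 (Fin n))) = {e.1, f.1, g.1} := by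
  simp [Set.image_insert_eq]

lemma perm_image_triple {n : ℕ} (P : Equiv.Perm (Edge n)) (e f g : Edge n) :
    (⇑P '' ({e, f, g} : Set (Edge n))) = {P e, P f, P g} := by
  simp [Set.image_insert_eq]

lemma edge_val_ne {n : ℕ} {e f : Edge n} (h : e ≠ f) : e.1 ≠ f.1 :=
  fun hv => h (Subtype.ext hv)

lemma cec_image_share {n : ℕ} (P : Equiv.Perm (Edge n))
    (hP : ∀ F : Set (Edge n),
      IsCycleEdgeSet (Subtype.val '' F) ↔ IsCycleEdgeSet (Subtype.val '' (⇑P '' F)))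
    {e f g : Edge n} (hef : e ≠ f) (hfg : f ≠ g) (heg : e ≠ g)
    (h : IsCycleEdgeSet {e.1, f.1, g.1}) :
    ∃ t, t ∈ (P e).1 ∧ t ∈ (P f).1 := by
  have h2 : IsCycleEdgeSet {(P e).1, (P f).1, (P g).1} := by
    have := (hP {e, f, g}).mp (by rwa [image_triple])
    rwa [perm_image_triple, image_triple] at this
  obtain ⟨a, b, c, hab, hbc, hac, heq⟩ := cec_triple h2
  exact triangle_pair_share
    (by rw [← heq]; simp) (by rw [← heq]; simp : (P f).1 ∈ _)

lemma share_preserved {n : ℕ} (P : Equiv.Perm (Edge n))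
    (hP : ∀ F : Set (Edge n),
      IsCycleEdgeSet (Subtype.val '' F) ↔ IsCycleEdgeSet (Subtype.val '' (⇑P '' F)))
    {e f : Edge n} (hef : e ≠ f) (h : ∃ t, t ∈ e.1 ∧ t ∈ f.1) :
    ∃ t, t ∈ (P e).1 ∧ t ∈ (P f).1 := by
  obtain ⟨t, hte, htf⟩ := h
  obtain ⟨a, hat, hea⟩ := other_endpoint e.2 hte
  obtain ⟨b, hbt, hfb⟩ := other_endpoint f.2 htf
  have hab : a ≠ b := by
    rintro rfl
    exact hef (Subtype.ext (hea.trans hfb.symm))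
  set g : Edge n := ⟨s(a,b), by simp [hab]⟩ with hg
  have hge : g ≠ e := by
    intro hge
    have : s(a,b) = s(t,a) := by rw [← hea]; exact congrArg Subtype.val hge
    rw [Sym2.eq_iff] at this
    rcases this with ⟨h1, h2⟩ | ⟨h1, h2⟩
    · exact hat h1
    · exact hbt h2
  have hgf : g ≠ f := by
    intro hgf
    have : s(a,b) = s(t,b) := by rw [← hfb]; exact congrArg Subtype.val hgf
    rw [Sym2.eq_iff] at this
    rcases this with ⟨h1, h2⟩ | ⟨h1, h2⟩
    · exact hat h1
    · exact hab h1
  have htri : IsCycleEdgeSet {e.1, f.1, g.1} := by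
    have := triangle_cec hat (fun h => hbt h.symm : t ≠ b) hab
    -- triangle on a, t, b : {s(a,t), s(t,b), s(b,a)}
    have hset : ({e.1, f.1, g.1} : Set (Sym2 (Fin n))) = {s(a,t), s(t,b), s(b,a)} := by
      rw [hea, hfb, hg]
      ext x
      simp [Sym2.eq_swap]
    rw [hset]
    exact this
  exact cec_image_share P hP hef hgf.symm (Ne.symm hge) htri

lemma key_lemma {n : ℕ} (hn : 3 ≤ n) (P : Equiv.Perm (Edge n))
    (hP : ∀ F : Set (Edge n),
      IsCycleEdgeSet (Subtype.val '' F) ↔ IsCycleEdgeSet (Subtype.val '' (⇑P '' F)))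
    (v : Fin n) : ∃ w : Fin n, ∀ e : Edge n, v ∈ e.1 → w ∈ (P e).1 := by
  -- find two other vertices
  have hcard : 1 < ({v}ᶜ : Finset (Fin n)).card := by
    rw [Finset.card_compl]
    simp
    omega
  obtain ⟨a, ha, b, hb, hab⟩ := Finset.one_lt_card.mp hcard
  rw [Finset.mem_compl, Finset.mem_singleton] at ha hb
  set e1 : Edge n := ⟨s(v,a), by simp [Ne.symm ha]⟩ with he1
  set e2 : Edge n := ⟨s(v,b), by simp [Ne.symm hb]⟩ with he2
  have h12 : e1 ≠ e2 := by
    intro h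
    have : s(v,a) = s(v,b) := congrArg Subtype.val h
    rw [Sym2.eq_iff] at this
    rcases this with ⟨_, h2⟩ | ⟨h1, h2⟩
    · exact hab h2
    · exact hb h1.symm
  obtain ⟨w, hw1, hw2⟩ := share_preserved P hP h12 ⟨v, by simp [he1], by simp [he2]⟩
  refine ⟨w, fun e hve => ?_⟩
  by_cases h1 : e = e1
  · rw [h1]; exact hw1
  by_cases h2 : e = e2
  · rw [h2]; exact hw2
  -- e is a third edge at v
  obtain ⟨c, hcv, hec⟩ := other_endpoint e.2 hve
  have s1 : ∃ t, t ∈ (P e1).1 ∧ t ∈ (P e).1 :=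
    share_preserved P hP (Ne.symm h1) ⟨v, by simp [he1], hve⟩
  have s2 : ∃ t, t ∈ (P e2).1 ∧ t ∈ (P e).1 :=
    share_preserved P hP (Ne.symm h2) ⟨v, by simp [he2], hve⟩
  -- the triple {e1, e2, e} is a star at v, hence not a cycle edge set
  have hstar : ¬ IsCycleEdgeSet {e1.1, e2.1, e.1} :=
    star_not_cec (edge_val_ne h12) (edge_val_ne (Ne.symm h2)) (edge_val_ne (Ne.symm h1))
      (by simp [he1]) (by simp [he2]) hve
  have hstar' : ¬ IsCycleEdgeSet {(P e1).1, (P e2).1, (P e).1} := by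
    intro h
    apply hstar
    have := (hP {e1, e2, e}).mpr (by rwa [perm_image_triple, image_triple])
    rwa [image_triple] at this
  -- so the three image edges have a common vertex
  have hPne12 : (P e1).1 ≠ (P e2).1 := edge_val_ne (fun h => h12 (P.injective h))
  have hPne1e : (P e1).1 ≠ (P e).1 := edge_val_ne (fun h => h1 (P.injective h).symm)
  have hPne2e : (P e2).1 ≠ (P e).1 := edge_val_ne (fun h => h2 (P.injective h).symm)
  have hcommon : ∃ t, t ∈ (P e1).1 ∧ t ∈ (P e2).1 ∧ t ∈ (P e).1 := by
    by_contra hnc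
    exact hstar' (pairwise_adj_cec hPne12 hPne2e hPne1e ⟨w, hw1, hw2⟩ s1 s2 hnc)
  obtain ⟨z, hz1, hz2, hze⟩ := hcommon
  have : z = w := shared_unique hPne12 hz1 hz2 hw1 hw2
  rwa [this] at hze

/-- For any `n ≥ 3`, any cycle automorphism of `K_n` (a
bijection of the edge set under which a set of edges is a cycle edge set if and
only if its image is) is induced by a vertex relabeling: it equals the edge
permutation arising from a permutation of the vertices of `K_n`. -/
theorem cycle_automorphism_is_vertex_relabeling
    {n : ℕ} (hn : 3 ≤ n) (P : Equiv.Perm (Edge n))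
    (hP : ∀ F : Set (Edge n),
      IsCycleEdgeSet (Subtype.val '' F) ↔ IsCycleEdgeSet (Subtype.val '' (⇑P '' F))) :
    ∃ σ : Equiv.Perm (Fin n), ∀ e : Edge n, (P e : Sym2 (Fin n)) = Sym2.map σ e.val := by
  choose σ0 hσ0 using key_lemma hn P hP
  have hinj : Function.Injective σ0 := by
    intro x y hxy
    by_contra hne
    -- find a third vertex
    have hcard : 0 < ({x, y}ᶜ : Finset (Fin n)).card := by
      rw [Finset.card_compl, Fintype.card_fin]
      have : ({x, y} : Finset (Fin n)).card ≤ 2 :=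
        (Finset.card_insert_le _ _).trans (by simp)
      omega
    obtain ⟨c, hc⟩ := Finset.card_pos.mp hcard
    simp [Finset.mem_compl] at hc
    obtain ⟨hcx, hcy⟩ := hc
    set exy : Edge n := ⟨s(x,y), by simp [hne]⟩ with hexy
    set eyc : Edge n := ⟨s(y,c), by simp [Ne.symm hcy]⟩ with heyc
    set ecx : Edge n := ⟨s(c,x), by simp [hcx]⟩ with hecx
    have d1 : exy.1 ≠ eyc.1 := by
      simp [hexy, heyc, Sym2.eq_iff]
      tauto
    have d2 : eyc.1 ≠ ecx.1 := by
      simp [heyc, hecx, Sym2.eq_iff]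
      tauto
    have d3 : exy.1 ≠ ecx.1 := by
      simp [hexy, hecx, Sym2.eq_iff]
      tauto
    have htri : IsCycleEdgeSet {exy.1, eyc.1, ecx.1} :=
      triangle_cec hne (Ne.symm hcy) (Ne.symm hcx)
    have himg : IsCycleEdgeSet {(P exy).1, (P eyc).1, (P ecx).1} := by
      have := (hP {exy, eyc, ecx}).mp (by rwa [image_triple])
      rwa [perm_image_triple, image_triple] at this
    -- but all three images contain σ0 x = σ0 y
    have m1 : σ0 x ∈ (P exy).1 := hσ0 x exy (by simp [hexy])
    have m2 : σ0 x ∈ (P eyc).1 := by rw [hxy]; exact hσ0 y eyc (by simp [heyc])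
    have m3 : σ0 x ∈ (P ecx).1 := hσ0 x ecx (by simp [hecx])
    have hd1 : exy ≠ eyc := fun h => d1 (congrArg Subtype.val h)
    have hd2 : eyc ≠ ecx := fun h => d2 (congrArg Subtype.val h)
    have hd3 : exy ≠ ecx := fun h => d3 (congrArg Subtype.val h)
    exact star_not_cec (edge_val_ne (fun h => hd1 (P.injective h)))
      (edge_val_ne (fun h => hd2 (P.injective h)))
      (edge_val_ne (fun h => hd3 (P.injective h))) m1 m2 m3 himg
  refine ⟨Equiv.ofBijective σ0 (Finite.injective_iff_bijective.mp hinj), fun e => ?_⟩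
  obtain ⟨ev, hd⟩ := e
  induction ev using Sym2.inductionOn with
  | hf x y =>
    have hxy : x ≠ y := by simpa using hd
    have m1 : σ0 x ∈ (P ⟨s(x,y), hd⟩).1 := hσ0 x _ (by simp)
    have m2 : σ0 y ∈ (P ⟨s(x,y), hd⟩).1 := hσ0 y _ (by simp)
    have hne : σ0 x ≠ σ0 y := fun h => hxy (hinj h)
    have : (P ⟨s(x,y), hd⟩).1 = s(σ0 x, σ0 y) := (Sym2.mem_and_mem_iff hne).mp ⟨m1, m2⟩
    simpa using this
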